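/- Let (aₙ)_{n≥2} be nonnegative real numbers such that the power series f(z) = z − Σ_{n≥2} aₙ zⁿ converges on 𝔻 and defines an analytic function there. Then f ∈ UCV if and only if Σ_{n≥2} n(2n−1)aₙ ≤ 1. -/

import Mathlib

open Complex Metric Set
open Filter
open scoped Topology

noncomputable section

/-- The open unit disk in ℂ. -/
def unitDisk : Set ℂ := Metric.ball (0 : ℂ) 1

/-- `f` is normalized analytic on the unit disk: analytic there, `f 0 = 0`, `f' 0 = 1`. -/
def IsNormalized (f : ℂ → ℂ) : Prop :=
  DifferentiableOn ℂ f unitDisk ∧ f 0 = 0 ∧ deriv f 0 = 1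

/-- Uniformly starlike functions (two-variable characterization). -/
def IsUST (f : ℂ → ℂ) : Prop :=
  IsNormalized f ∧ Set.InjOn f unitDisk ∧
    ∀ z ∈ unitDisk, ∀ ζ ∈ unitDisk, z ≠ ζ →
      0 ≤ ((z - ζ) * deriv f z / (f z - f ζ)).re

/-- Uniformly convex functions (one-variable characterization). -/
def IsUCV (f : ℂ → ℂ) : Prop :=
  IsNormalized f ∧ Set.InjOn f unitDisk ∧
    ∀ z ∈ unitDisk,
      ‖z * deriv (deriv f) z / deriv f z‖
        < (1 + z * deriv (deriv f) z / deriv f z).re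

/-- Parabolic starlike functions. -/
def IsSP (f : ℂ → ℂ) : Prop :=
  IsNormalized f ∧
    ∀ z ∈ unitDisk, z ≠ 0 →
      ‖z * deriv f z / f z - 1‖ < (z * deriv f z / f z).re

/-- The `n`-th Taylor coefficient of `f` at the origin. -/
def taylorCoeff (f : ℂ → ℂ) (n : ℕ) : ℂ :=
  iteratedDeriv n f 0 / (n.factorial : ℂ)

/-! ### Auxiliary lemmas -/

lemma mem_unitDisk {z : ℂ} : z ∈ unitDisk ↔ ‖z‖ < 1 := by
  simp [unitDisk, mem_ball_zero_iff]

lemma UCVaux.bound_helper {A B q C p : ℝ} (hB : 0 ≤ B) (hq0 : 0 ≤ q) (hqp : q ≤ p)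
    (hAC : 0 ≤ A) (hC : A ≤ C) : A * B * q ≤ C * B * p := by
  have h1 : A * B * q ≤ A * B * p := mul_le_mul_of_nonneg_left hqp (mul_nonneg hAC hB)
  have h2 : A * B * p ≤ C * B * p :=
    mul_le_mul_of_nonneg_right (mul_le_mul_of_nonneg_right hC hB) (le_trans hq0 hqp)
  linarith

lemma UCVaux.geom_sq {q : ℝ} (h0 : 0 ≤ q) (h1 : q < 1) :
    Summable (fun n : ℕ => ((n : ℝ) + 2) ^ 2 * q ^ n) := by
  have h : ‖q‖ < 1 := by rwa [Real.norm_eq_abs, _root_.abs_of_nonneg h0]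
  have h2 := summable_pow_mul_geometric_of_norm_lt_one (R := ℝ) 2 h
  have h1' := summable_pow_mul_geometric_of_norm_lt_one (R := ℝ) 1 h
  have h0' := summable_geometric_of_lt_one h0 h1
  refine ((h2.add (h1'.mul_left 4)).add (h0'.mul_left 4)).congr fun n => ?_
  ring

/-- key summability: `(n+2)^2 * a (n+2) * r^n` is summable for `0 ≤ r < 1`. -/
lemma UCVaux.key_summable (a : ℕ → ℝ) (ha : ∀ n : ℕ, 0 ≤ a (n + 2))
    (hconv : ∀ z ∈ unitDisk, Summable (fun n : ℕ => (a (n + 2) : ℂ) * z ^ (n + 2)))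
    {r ρ : ℝ} (h0 : 0 ≤ r) (hrρ : r < ρ) (hρ1 : ρ < 1) :
    Summable (fun n : ℕ => ((n : ℝ) + 2) ^ 2 * a (n + 2) * r ^ n) := by
  have hρ0 : 0 < ρ := lt_of_le_of_lt h0 hrρ
  have hρd : (ρ : ℂ) ∈ unitDisk := by
    rw [mem_unitDisk, Complex.norm_real, Real.norm_eq_abs, _root_.abs_of_nonneg hρ0.le]; exact hρ1
  have hsum : Summable (fun n : ℕ => a (n + 2) * ρ ^ (n + 2)) := by
    have h := summable_norm_iff.mpr (hconv (ρ : ℂ) hρd)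
    refine h.congr fun n => ?_
    rw [norm_mul, norm_pow, Complex.norm_real, Complex.norm_real, Real.norm_eq_abs,
      Real.norm_eq_abs, _root_.abs_of_nonneg (ha n), _root_.abs_of_nonneg hρ0.le]
  set C : ℝ := ∑' n : ℕ, a (n + 2) * ρ ^ (n + 2) with hCdef
  have hC : ∀ n : ℕ, a (n + 2) * ρ ^ (n + 2) ≤ C :=
    fun n => Summable.le_tsum hsum n (fun j _ => mul_nonneg (ha j) (pow_nonneg hρ0.le _))
  have hq0 : 0 ≤ r / ρ := div_nonneg h0 hρ0.le
  have hq1 : r / ρ < 1 := (div_lt_one hρ0).mpr hrρ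
  refine Summable.of_nonneg_of_le
    (fun n => mul_nonneg (mul_nonneg (by positivity) (ha n)) (pow_nonneg h0 n))
    (fun n => ?_) (((UCVaux.geom_sq hq0 hq1)).mul_left (C / ρ ^ 2))
  have hb := hC n
  have hρn : (0:ℝ) < ρ ^ (n + 2) := pow_pos hρ0 _
  have key : ((n : ℝ) + 2) ^ 2 * a (n + 2) * r ^ n
      = (((n : ℝ) + 2) ^ 2 * r ^ n / ρ ^ (n + 2)) * (a (n + 2) * ρ ^ (n + 2)) := by
    field_simp
  rw [key]
  have h2 : (((n : ℝ) + 2) ^ 2 * r ^ n / ρ ^ (n + 2)) * (a (n + 2) * ρ ^ (n + 2))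
      ≤ (((n : ℝ) + 2) ^ 2 * r ^ n / ρ ^ (n + 2)) * C :=
    mul_le_mul_of_nonneg_left hb (by positivity)
  refine h2.trans (le_of_eq ?_)
  rw [div_pow]
  field_simp
  ring

/-- derivative of `∑ aₙ₊₂ w^(n+2)`. -/
lemma UCVaux.hasDerivAt_S (a : ℕ → ℝ)
    (hc : ∀ r : ℝ, 0 ≤ r → r < 1 → Summable (fun n : ℕ => |a (n + 2)| * r ^ (n + 2)))
    {z : ℂ} (hz : ‖z‖ < 1) :
    HasDerivAt (fun w : ℂ => ∑' n : ℕ, (a (n + 2) : ℂ) * w ^ (n + 2))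
      (∑' n : ℕ, ((((n : ℝ) + 2) * a (n + 2) : ℝ) : ℂ) * z ^ (n + 1)) z := by
  set r := ‖z‖ with hrdef
  have hr0 : 0 ≤ r := norm_nonneg z
  set ρ : ℝ := (1 + r) / 2 with hρdef
  have hrρ : r < ρ := by rw [hρdef]; linarith
  have hρ0 : 0 ≤ ρ := le_trans hr0 hrρ.le
  have hρ1 : ρ < 1 := by rw [hρdef]; linarith
  have hzU : z ∈ Metric.ball (0 : ℂ) ρ := by
    rw [mem_ball_zero_iff]; exact hrρ
  have hF : ∀ n : ℕ, DifferentiableOn ℂ (fun w : ℂ => (a (n + 2) : ℂ) * w ^ (n + 2))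
      (Metric.ball (0 : ℂ) ρ) :=
    fun n => ((differentiable_pow _).const_mul _).differentiableOn
  have hle : ∀ (n : ℕ) (w : ℂ), w ∈ Metric.ball (0 : ℂ) ρ →
      ‖(a (n + 2) : ℂ) * w ^ (n + 2)‖ ≤ |a (n + 2)| * ρ ^ (n + 2) := by
    intro n w hw
    rw [norm_mul, norm_pow, Complex.norm_real, Real.norm_eq_abs]
    have hwρ : ‖w‖ ≤ ρ := le_of_lt (mem_ball_zero_iff.mp hw)
    gcongr
  have hs := hc ρ hρ0 hρ1
  have hsum := Complex.hasSum_deriv_of_summable_norm hs hF isOpen_ball hle hzU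
  have heq : (fun n : ℕ => deriv (fun w : ℂ => (a (n + 2) : ℂ) * w ^ (n + 2)) z)
      = fun n : ℕ => ((((n : ℝ) + 2) * a (n + 2) : ℝ) : ℂ) * z ^ (n + 1) := by
    funext n
    rw [deriv_const_mul _ (differentiableAt_pow _), deriv_pow_field]
    have hsub : n + 2 - 1 = n + 1 := rfl
    rw [hsub]
    push_cast
    ring
  rw [heq] at hsum
  have hdOn := Complex.differentiableOn_tsum_of_summable_norm hs hF isOpen_ball hle
  have hdz := (hdOn.differentiableAt (isOpen_ball.mem_nhds hzU)).hasDerivAt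
  rwa [← hsum.tsum_eq] at hdz

/-- derivative of `∑ cₙ w^(n+1)`. -/
lemma UCVaux.hasDerivAt_T (c : ℕ → ℝ)
    (hc : ∀ r : ℝ, 0 ≤ r → r < 1 → Summable (fun n : ℕ => |c n| * r ^ (n + 1)))
    {z : ℂ} (hz : ‖z‖ < 1) :
    HasDerivAt (fun w : ℂ => ∑' n : ℕ, (c n : ℂ) * w ^ (n + 1))
      (∑' n : ℕ, ((((n : ℝ) + 1) * c n : ℝ) : ℂ) * z ^ n) z := by
  set r := ‖z‖ with hrdef
  have hr0 : 0 ≤ r := norm_nonneg z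
  set ρ : ℝ := (1 + r) / 2 with hρdef
  have hrρ : r < ρ := by rw [hρdef]; linarith
  have hρ0 : 0 ≤ ρ := le_trans hr0 hrρ.le
  have hρ1 : ρ < 1 := by rw [hρdef]; linarith
  have hzU : z ∈ Metric.ball (0 : ℂ) ρ := by
    rw [mem_ball_zero_iff]; exact hrρ
  have hF : ∀ n : ℕ, DifferentiableOn ℂ (fun w : ℂ => (c n : ℂ) * w ^ (n + 1))
      (Metric.ball (0 : ℂ) ρ) :=
    fun n => ((differentiable_pow _).const_mul _).differentiableOn
  have hle : ∀ (n : ℕ) (w : ℂ), w ∈ Metric.ball (0 : ℂ) ρ →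
      ‖(c n : ℂ) * w ^ (n + 1)‖ ≤ |c n| * ρ ^ (n + 1) := by
    intro n w hw
    rw [norm_mul, norm_pow, Complex.norm_real, Real.norm_eq_abs]
    have hwρ : ‖w‖ ≤ ρ := le_of_lt (mem_ball_zero_iff.mp hw)
    gcongr
  have hs := hc ρ hρ0 hρ1
  have hsum := Complex.hasSum_deriv_of_summable_norm hs hF isOpen_ball hle hzU
  have heq : (fun n : ℕ => deriv (fun w : ℂ => (c n : ℂ) * w ^ (n + 1)) z)
      = fun n : ℕ => ((((n : ℝ) + 1) * c n : ℝ) : ℂ) * z ^ n := by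
    funext n
    rw [deriv_const_mul _ (differentiableAt_pow _), deriv_pow_field]
    have hsub : n + 1 - 1 = n := rfl
    rw [hsub]
    push_cast
    ring
  rw [heq] at hsum
  have hdOn := Complex.differentiableOn_tsum_of_summable_norm hs hF isOpen_ball hle
  have hdz := (hdOn.differentiableAt (isOpen_ball.mem_nhds hzU)).hasDerivAt
  rwa [← hsum.tsum_eq] at hdz

lemma UCVaux.norm_pow_sub_pow {z ζ : ℂ} (hz : ‖z‖ ≤ 1) (hζ : ‖ζ‖ ≤ 1) (m : ℕ) :
    ‖z ^ m - ζ ^ m‖ ≤ m * ‖z - ζ‖ := by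
  induction m with
  | zero => simp
  | succ m ih =>
    have hsplit : z ^ (m + 1) - ζ ^ (m + 1) = z ^ m * (z - ζ) + (z ^ m - ζ ^ m) * ζ := by
      ring
    rw [hsplit]
    have h1 : ‖z ^ m * (z - ζ)‖ ≤ 1 * ‖z - ζ‖ := by
      rw [norm_mul, norm_pow]
      exact mul_le_mul_of_nonneg_right (pow_le_one₀ (norm_nonneg z) hz) (norm_nonneg _)
    have h2 : ‖(z ^ m - ζ ^ m) * ζ‖ ≤ (m * ‖z - ζ‖) * 1 := by
      rw [norm_mul]
      exact mul_le_mul ih hζ (norm_nonneg _) (by positivity)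
    calc ‖z ^ m * (z - ζ) + (z ^ m - ζ ^ m) * ζ‖
        ≤ ‖z ^ m * (z - ζ)‖ + ‖(z ^ m - ζ ^ m) * ζ‖ := norm_add_le _ _
      _ ≤ 1 * ‖z - ζ‖ + (m * ‖z - ζ‖) * 1 := add_le_add h1 h2
      _ = (↑(m + 1)) * ‖z - ζ‖ := by push_cast; ring

/-- a function with negative coefficients is uniformly convex iff
Σ_{n≥2} n(2n−1)aₙ ≤ 1. -/
theorem ucv_negative_coefficients_iff (a : ℕ → ℝ) (ha : ∀ n, 2 ≤ n → 0 ≤ a n)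
    (f : ℂ → ℂ)
    (hconv : ∀ z ∈ unitDisk, Summable (fun n : ℕ => (a (n + 2) : ℂ) * z ^ (n + 2)))
    (hf : ∀ z ∈ unitDisk, f z = z - ∑' n : ℕ, (a (n + 2) : ℂ) * z ^ (n + 2))
    (hfd : DifferentiableOn ℂ f unitDisk) :
    IsUCV f ↔
      (Summable (fun n : ℕ => ((n : ℝ) + 2) * (2 * ((n : ℝ) + 2) - 1) * a (n + 2)) ∧
        ∑' n : ℕ, ((n : ℝ) + 2) * (2 * ((n : ℝ) + 2) - 1) * a (n + 2) ≤ 1) := by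
  have ha' : ∀ n : ℕ, 0 ≤ a (n + 2) := fun n => ha (n + 2) (by omega)
  have hn2 : ∀ n : ℕ, (0:ℝ) ≤ (n : ℝ) + 2 := fun n => by positivity
  -- key summability at each radius
  have hkey : ∀ r : ℝ, 0 ≤ r → r < 1 →
      Summable (fun n : ℕ => ((n : ℝ) + 2) ^ 2 * a (n + 2) * r ^ n) :=
    fun r h0 h1 => UCVaux.key_summable a ha' hconv h0 (show r < (1 + r)/2 by linarith)
      (show (1 + r)/2 < 1 by linarith)
  -- summability of the various weighted series, `0 ≤ r < 1`
  have hu_sum : ∀ r : ℝ, 0 ≤ r → r < 1 →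
      Summable (fun n : ℕ => ((n : ℝ) + 2) * a (n + 2) * r ^ (n + 1)) := by
    intro r h0 h1
    refine Summable.of_nonneg_of_le
      (fun n => mul_nonneg (mul_nonneg (hn2 n) (ha' n)) (pow_nonneg h0 _))
      (fun n => ?_) (hkey r h0 h1)
    exact UCVaux.bound_helper (ha' n) (pow_nonneg h0 _)
      (pow_le_pow_of_le_one h0 h1.le (by omega)) (hn2 n)
      (le_self_pow₀ (by linarith [hn2 n] ) two_ne_zero)
  have hv_sum : ∀ r : ℝ, 0 ≤ r → r < 1 →
      Summable (fun n : ℕ => ((n : ℝ) + 2) * (((n : ℝ) + 1) * a (n + 2)) * r ^ n) := by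
    intro r h0 h1
    refine Summable.of_nonneg_of_le
      (fun n => mul_nonneg (mul_nonneg (hn2 n) (mul_nonneg (by positivity) (ha' n)))
        (pow_nonneg h0 _))
      (fun n => ?_) (hkey r h0 h1)
    have hp : (0:ℝ) ≤ r ^ n := pow_nonneg h0 n
    nlinarith [mul_nonneg (mul_nonneg (mul_nonneg (hn2 n)
      (show (0:ℝ) ≤ (n:ℝ) + 1 by positivity)) (ha' n)) hp,
      mul_nonneg (mul_nonneg (hn2 n) (ha' n)) hp]
  have hw_sum : ∀ r : ℝ, 0 ≤ r → r < 1 →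
      Summable (fun n : ℕ => ((n : ℝ) + 2) * (2 * ((n : ℝ) + 2) - 1) * a (n + 2) * r ^ (n + 1)) := by
    intro r h0 h1
    refine Summable.of_nonneg_of_le (fun n => ?_) (fun n => ?_) ((hkey r h0 h1).mul_left 2)
    · have h21 : (0:ℝ) ≤ 2 * ((n:ℝ) + 2) - 1 := by linarith [hn2 n]
      exact mul_nonneg (mul_nonneg (mul_nonneg (hn2 n) h21) (ha' n)) (pow_nonneg h0 _)
    · have hq : r ^ (n + 1) ≤ r ^ n := pow_le_pow_of_le_one h0 h1.le (by omega)
      have hq0 : (0:ℝ) ≤ r ^ (n + 1) := pow_nonneg h0 _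
      have hb := UCVaux.bound_helper (B := a (n + 2)) (ha' n) hq0 hq
        (A := ((n:ℝ)+2) * (2 * ((n:ℝ)+2) - 1)) (C := 2 * ((n:ℝ)+2)^2)
        (by nlinarith [hn2 n]) (by nlinarith [hn2 n])
      calc ((n : ℝ) + 2) * (2 * ((n : ℝ) + 2) - 1) * a (n + 2) * r ^ (n + 1)
          ≤ 2 * ((n:ℝ)+2)^2 * a (n + 2) * r ^ n := hb
        _ = 2 * (((n:ℝ)+2)^2 * a (n + 2) * r ^ n) := by ring
  -- the functions S, T, V
  set S : ℂ → ℂ := fun w => ∑' n : ℕ, (a (n + 2) : ℂ) * w ^ (n + 2) with hSdef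
  set T : ℂ → ℂ := fun w =>
    ∑' n : ℕ, ((((n : ℝ) + 2) * a (n + 2) : ℝ) : ℂ) * w ^ (n + 1) with hTdef
  set V : ℂ → ℂ := fun w =>
    ∑' n : ℕ, ((((n : ℝ) + 2) * (((n : ℝ) + 1) * a (n + 2)) : ℝ) : ℂ) * w ^ n with hVdef
  have habs_eq : ∀ n : ℕ, |a (n + 2)| = a (n + 2) := fun n => _root_.abs_of_nonneg (ha' n)
  have hTd : ∀ z : ℂ, ‖z‖ < 1 → HasDerivAt S (T z) z := by
    intro z hz
    refine UCVaux.hasDerivAt_S a (fun r h0 h1 => ?_) hz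
    refine Summable.of_nonneg_of_le
      (fun n => mul_nonneg (abs_nonneg _) (pow_nonneg h0 _)) (fun n => ?_) (hkey r h0 h1)
    rw [habs_eq]
    calc a (n + 2) * r ^ (n + 2) = 1 * a (n + 2) * r ^ (n + 2) := by ring
      _ ≤ ((n:ℝ)+2)^2 * a (n + 2) * r ^ n :=
        UCVaux.bound_helper (ha' n) (pow_nonneg h0 _)
          (pow_le_pow_of_le_one h0 h1.le (by omega))
          zero_le_one (by nlinarith [hn2 n])
  have hVd : ∀ z : ℂ, ‖z‖ < 1 → HasDerivAt T (V z) z := by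
    intro z hz
    have h := UCVaux.hasDerivAt_T (fun n => ((n : ℝ) + 2) * a (n + 2)) (fun r h0 h1 => ?_) hz
    · have he : (∑' n : ℕ, ((((n : ℝ) + 1) * (((n : ℝ) + 2) * a (n + 2)) : ℝ) : ℂ) * z ^ n)
          = V z := tsum_congr fun n => by push_cast; ring
      rwa [he] at h
    · refine Summable.of_nonneg_of_le
        (fun n => mul_nonneg (abs_nonneg _) (pow_nonneg h0 _)) (fun n => ?_) (hu_sum r h0 h1)
      rw [abs_mul, _root_.abs_of_nonneg (hn2 n), habs_eq]
  have hopenU : IsOpen unitDisk := by unfold unitDisk; exact isOpen_ball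
  have hmem : ∀ z : ℂ, ‖z‖ < 1 → z ∈ unitDisk := fun z hz => mem_unitDisk.mpr hz
  have hfz : ∀ z : ℂ, ‖z‖ < 1 → HasDerivAt f (1 - T z) z := by
    intro z hz
    have h1 : HasDerivAt (fun w : ℂ => w - S w) (1 - T z) z :=
      (hasDerivAt_id z).sub (hTd z hz)
    refine h1.congr_of_eventuallyEq ?_
    filter_upwards [hopenU.mem_nhds (hmem z hz)] with w hw
    exact hf w hw
  have hderiv_f : ∀ z : ℂ, ‖z‖ < 1 → deriv f z = 1 - T z :=
    fun z hz => (hfz z hz).deriv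
  have hf2 : ∀ z : ℂ, ‖z‖ < 1 → deriv (deriv f) z = -V z := by
    intro z hz
    have h1 : HasDerivAt (fun w : ℂ => 1 - T w) (0 - V z) z :=
      (hasDerivAt_const z 1).sub (hVd z hz)
    rw [zero_sub] at h1
    have h2 : HasDerivAt (deriv f) (-V z) z := by
      refine h1.congr_of_eventuallyEq ?_
      filter_upwards [hopenU.mem_nhds (hmem z hz)] with w hw
      exact hderiv_f w (mem_unitDisk.mp hw)
    exact h2.deriv
  -- values at 0
  have hT0 : T (0 : ℂ) = 0 := by
    simp only [hTdef]
    rw [tsum_congr (fun n : ℕ => by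
      rw [zero_pow (show n + 1 ≠ 0 by omega), mul_zero]), tsum_zero]
  have hf0 : f 0 = 0 := by
    rw [hf 0 (hmem 0 (by simp)),
      tsum_congr (fun n : ℕ => by
        rw [zero_pow (show n + 2 ≠ 0 by omega), mul_zero]), tsum_zero, sub_zero]
  have hd0 : deriv f 0 = 1 := by
    rw [hderiv_f 0 (by simp), hT0, sub_zero]
  -- the real functions u and v
  set u : ℝ → ℝ := fun r => ∑' n : ℕ, ((n : ℝ) + 2) * a (n + 2) * r ^ (n + 1) with hudef
  set v : ℝ → ℝ := fun r =>
    ∑' n : ℕ, ((n : ℝ) + 2) * (((n : ℝ) + 1) * a (n + 2)) * r ^ n with hvdef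
  have hTu : ∀ r : ℝ, T (r : ℂ) = ((u r : ℝ) : ℂ) := by
    intro r
    simp only [hudef, hTdef]
    rw [Complex.ofReal_tsum]
    exact tsum_congr fun n => by push_cast; ring
  have hVv : ∀ r : ℝ, V (r : ℂ) = ((v r : ℝ) : ℂ) := by
    intro r
    simp only [hvdef, hVdef]
    rw [Complex.ofReal_tsum]
    exact tsum_congr fun n => by push_cast; ring
  have hu0 : u 0 = 0 := by
    simp only [hudef]
    rw [tsum_congr (fun n : ℕ => by
      rw [zero_pow (show n + 1 ≠ 0 by omega), mul_zero]), tsum_zero]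
  have hv_nonneg : ∀ r : ℝ, 0 ≤ r → 0 ≤ v r := by
    intro r h0
    simp only [hvdef]
    exact tsum_nonneg fun n => mul_nonneg (mul_nonneg (hn2 n)
      (mul_nonneg (by positivity) (ha' n))) (pow_nonneg h0 _)
  have hWnn : ∀ n : ℕ, 0 ≤ ((n : ℝ) + 2) * (2 * ((n : ℝ) + 2) - 1) * a (n + 2) := by
    intro n
    have h21 : (0:ℝ) ≤ 2 * ((n : ℝ) + 2) - 1 := by linarith [hn2 n]
    exact mul_nonneg (mul_nonneg (hn2 n) h21) (ha' n)
  have hsum_id : ∀ r : ℝ, 0 ≤ r → r < 1 →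
      2 * (r * v r) + u r
        = ∑' n : ℕ, ((n : ℝ) + 2) * (2 * ((n : ℝ) + 2) - 1) * a (n + 2) * r ^ (n + 1) := by
    intro r h0 h1
    simp only [hudef, hvdef]
    rw [← tsum_mul_left, ← tsum_mul_left,
      ← Summable.tsum_add (((hv_sum r h0 h1).mul_left r).mul_left 2) (hu_sum r h0 h1)]
    exact tsum_congr fun n => by ring
  have hu_cont : ∀ c : ℝ, 0 ≤ c → c < 1 → ContinuousAt u c := by
    intro c h0 h1
    have hρ : c < (1 + c) / 2 := by linarith
    have hρ1 : (1 + c) / 2 < 1 := by linarith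
    have hρ0 : (0:ℝ) ≤ (1 + c) / 2 := by linarith
    have hcont : ContinuousOn u (Metric.ball (0 : ℝ) ((1 + c) / 2)) := by
      simp only [hudef]
      refine continuousOn_tsum
        (fun n => (Continuous.continuousOn (by fun_prop))) (hu_sum _ hρ0 hρ1) ?_
      intro n x hx
      have hxρ : |x| ≤ (1 + c) / 2 := by
        have := mem_ball_zero_iff.mp hx
        rw [Real.norm_eq_abs] at this
        exact this.le
      calc ‖((n : ℝ) + 2) * a (n + 2) * x ^ (n + 1)‖
          = ((n : ℝ) + 2) * a (n + 2) * |x| ^ (n + 1) := by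
            rw [Real.norm_eq_abs, abs_mul, _root_.abs_pow, abs_mul,
              _root_.abs_of_nonneg (hn2 n), habs_eq]
        _ ≤ ((n : ℝ) + 2) * a (n + 2) * ((1 + c) / 2) ^ (n + 1) :=
            mul_le_mul_of_nonneg_left (pow_le_pow_left₀ (abs_nonneg x) hxρ _)
              (mul_nonneg (hn2 n) (ha' n))
    refine hcont.continuousAt (isOpen_ball.mem_nhds ?_)
    rw [mem_ball_zero_iff, Real.norm_eq_abs, _root_.abs_of_nonneg h0]
    exact hρ
  constructor
  · rintro ⟨-, -, hucv⟩
    have hstepA : ∀ r : ℝ, 0 < r → r < 1 → u r < 1 → 2 * (r * v r) + u r < 1 := by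
      intro r h0 h1 hu1
      have hz : ‖(r : ℂ)‖ < 1 := by
        rw [Complex.norm_real, Real.norm_eq_abs, _root_.abs_of_nonneg h0.le]; exact h1
      have hcond := hucv (r : ℂ) (hmem _ hz)
      rw [hf2 (r : ℂ) hz, hderiv_f (r : ℂ) hz, hTu r, hVv r] at hcond
      set x : ℝ := r * -(v r) / (1 - u r) with hxdef
      have hexp : (r : ℂ) * -((v r : ℝ) : ℂ) / (1 - ((u r : ℝ) : ℂ)) = ((x : ℝ) : ℂ) := by
        rw [hxdef]; push_cast; ring
      rw [hexp, Complex.norm_real, Real.norm_eq_abs] at hcond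
      have hre : (1 + ((x : ℝ) : ℂ)).re = 1 + x := by simp
      rw [hre] at hcond
      have hden : 0 < 1 - u r := by linarith
      have hv0 : 0 ≤ v r := hv_nonneg r h0.le
      have hx_eq : x = -(r * v r / (1 - u r)) := by rw [hxdef]; ring
      have hxle : x ≤ 0 := by
        rw [hx_eq]
        have : 0 ≤ r * v r / (1 - u r) := div_nonneg (mul_nonneg h0.le hv0) hden.le
        linarith
      rw [_root_.abs_of_nonpos hxle] at hcond
      have h2 : r * v r / (1 - u r) < 1 / 2 := by rw [hx_eq] at hcond; linarith
      have h3 : 2 * (r * v r) < 1 - u r := by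
        rw [div_lt_iff₀ hden] at h2; linarith
      linarith
    have h3u : ∀ r : ℝ, 0 ≤ r → r < 1 → 3 * u r ≤ 2 * (r * v r) + u r := by
      intro r h0 h1
      rw [hsum_id r h0 h1]
      simp only [hudef]
      rw [← tsum_mul_left]
      refine Summable.tsum_le_tsum (fun n => ?_) ((hu_sum r h0 h1).mul_left 3) (hw_sum r h0 h1)
      have hq : (0:ℝ) ≤ r ^ (n + 1) := pow_nonneg h0 _
      nlinarith [mul_nonneg (mul_nonneg (hn2 n) (ha' n)) hq,
        mul_nonneg (mul_nonneg (mul_nonneg (Nat.cast_nonneg (α := ℝ) n) (hn2 n)) (ha' n)) hq]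
    have main_u : ∀ R : ℝ, 0 ≤ R → R < 1 → u R < 1 / 3 := by
      intro R hR0 hR1
      by_contra hcon
      push_neg at hcon
      set s : Set ℝ := {x : ℝ | x ∈ Set.Icc 0 R ∧ u x ≤ 1 / 3} with hsdef
      have h0s : (0:ℝ) ∈ s := by
        refine ⟨⟨le_refl 0, hR0⟩, ?_⟩
        rw [hu0]; norm_num
      have hbdd : BddAbove s := ⟨R, fun x hx => hx.1.2⟩
      have hsne : s.Nonempty := ⟨0, h0s⟩
      set c := sSup s with hcdef
      have hc0 : 0 ≤ c := le_csSup hbdd h0s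
      have hcR : c ≤ R := csSup_le hsne (fun x hx => hx.1.2)
      have hc1 : c < 1 := lt_of_le_of_lt hcR hR1
      have hcont := hu_cont c hc0 hc1
      have huc : u c ≤ 1 / 3 := by
        by_contra h
        push_neg at h
        have hev : u ⁻¹' (Set.Ioi (1 / 3 : ℝ)) ∈ 𝓝 c :=
          hcont.preimage_mem_nhds (Ioi_mem_nhds h)
        obtain ⟨ε, hε0, hε⟩ := Metric.mem_nhds_iff.mp hev
        have hub : ∀ x ∈ s, x ≤ c - ε / 2 := by
          intro x hx
          by_contra hxc
          push_neg at hxc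
          have hxle : x ≤ c := le_csSup hbdd hx
          have hd : dist x c < ε := by
            rw [Real.dist_eq, _root_.abs_of_nonpos (by linarith)]; linarith
          have h13 : 1 / 3 < u x := hε (Metric.mem_ball.mpr hd)
          exact absurd hx.2 (not_le.mpr h13)
        have := csSup_le hsne hub
        linarith
      have hstrict : u c < 1 / 3 := by
        rcases eq_or_lt_of_le hc0 with h0 | h0
        · rw [← h0, hu0]; norm_num
        · have h1 : u c < 1 := by linarith
          have hA := hstepA c h0 hc1 h1
          have h3 := h3u c hc0 hc1
          linarith
      have hcltR : c < R := by
        rcases eq_or_lt_of_le hcR with h | h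
        · exfalso; rw [h] at hstrict; linarith
        · exact h
      have hev2 : u ⁻¹' (Set.Iio (1 / 3 : ℝ)) ∈ 𝓝 c :=
        hcont.preimage_mem_nhds (Iio_mem_nhds hstrict)
      obtain ⟨ε, hε0, hε⟩ := Metric.mem_nhds_iff.mp hev2
      set y := min R (c + ε / 2) with hydef
      have hcy : c < y := lt_min hcltR (by linarith)
      have hymem : y ∈ s := by
        refine ⟨⟨by linarith, min_le_left _ _⟩, ?_⟩
        have hd : dist y c < ε := by
          rw [Real.dist_eq, _root_.abs_of_nonneg (by linarith)]
          have : y ≤ c + ε / 2 := min_le_right _ _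
          linarith
        exact le_of_lt (hε (Metric.mem_ball.mpr hd))
      have := le_csSup hbdd hymem
      linarith
    have hpartial : ∀ (N : ℕ) (r : ℝ), 0 < r → r < 1 →
        ∑ n ∈ Finset.range N,
          ((n : ℝ) + 2) * (2 * ((n : ℝ) + 2) - 1) * a (n + 2) * r ^ (n + 1) < 1 := by
      intro N r h0 h1
      have hle := Summable.sum_le_tsum (Finset.range N)
        (fun n _ => mul_nonneg (hWnn n) (pow_nonneg h0.le _)) (hw_sum r h0.le h1)
      have hu1 : u r < 1 := by
        have := main_u r h0.le h1; linarith
      calc ∑ n ∈ Finset.range N,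
            ((n : ℝ) + 2) * (2 * ((n : ℝ) + 2) - 1) * a (n + 2) * r ^ (n + 1)
          ≤ ∑' n : ℕ, ((n : ℝ) + 2) * (2 * ((n : ℝ) + 2) - 1) * a (n + 2) * r ^ (n + 1) := hle
        _ = 2 * (r * v r) + u r := (hsum_id r h0.le h1).symm
        _ < 1 := hstepA r h0 h1 hu1
    have mainN : ∀ N : ℕ, ∑ n ∈ Finset.range N,
        ((n : ℝ) + 2) * (2 * ((n : ℝ) + 2) - 1) * a (n + 2) ≤ 1 := by
      intro N
      have hcontpoly : Filter.Tendsto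
          (fun r : ℝ => ∑ n ∈ Finset.range N,
            ((n : ℝ) + 2) * (2 * ((n : ℝ) + 2) - 1) * a (n + 2) * r ^ (n + 1))
          (nhdsWithin (1 : ℝ) (Set.Iio 1))
          (𝓝 (∑ n ∈ Finset.range N,
            ((n : ℝ) + 2) * (2 * ((n : ℝ) + 2) - 1) * a (n + 2) * (1:ℝ) ^ (n + 1))) := by
        apply Filter.Tendsto.mono_left _ nhdsWithin_le_nhds
        exact Continuous.tendsto
          (continuous_finset_sum _ fun i _ => continuous_const.mul (continuous_pow (i + 1))) 1
      simp only [one_pow, mul_one] at hcontpoly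
      refine le_of_tendsto hcontpoly ?_
      filter_upwards [Ioo_mem_nhdsLT_of_mem
        (show (1:ℝ) ∈ Set.Ioc (1/2 : ℝ) 1 by norm_num)] with r hr
      exact (hpartial N r (by linarith [hr.1]) hr.2).le
    exact ⟨summable_of_sum_range_le hWnn mainN, Real.tsum_le_of_sum_range_le hWnn mainN⟩
  · rintro ⟨hsumW, htsumW⟩
    have hsum_u1 : Summable (fun n : ℕ => ((n : ℝ) + 2) * a (n + 2)) := by
      refine Summable.of_nonneg_of_le (fun n => mul_nonneg (hn2 n) (ha' n)) (fun n => ?_) hsumW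
      nlinarith [mul_nonneg (mul_nonneg (hn2 n) (ha' n)) (Nat.cast_nonneg (α := ℝ) n),
        mul_nonneg (hn2 n) (ha' n)]
    have hsum_v1 : Summable (fun n : ℕ => ((n : ℝ) + 2) * (((n : ℝ) + 1) * a (n + 2))) := by
      refine Summable.of_nonneg_of_le
        (fun n => mul_nonneg (hn2 n) (mul_nonneg (by positivity) (ha' n)))
        (fun n => ?_) hsumW
      nlinarith [mul_nonneg (mul_nonneg (hn2 n) (ha' n)) (Nat.cast_nonneg (α := ℝ) n),
        mul_nonneg (hn2 n) (ha' n)]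
    have hu1_le : (∑' n : ℕ, ((n : ℝ) + 2) * a (n + 2)) ≤ 1 / 3 := by
      have h3 : (∑' n : ℕ, 3 * (((n : ℝ) + 2) * a (n + 2))) ≤ 1 := by
        refine le_trans (Summable.tsum_le_tsum (fun n => ?_) (hsum_u1.mul_left 3) hsumW) htsumW
        nlinarith [mul_nonneg (mul_nonneg (hn2 n) (ha' n)) (Nat.cast_nonneg (α := ℝ) n)]
      rw [tsum_mul_left] at h3
      linarith
    have hinj : Set.InjOn f unitDisk := by
      intro z hz ζ hζ hfeq
      by_contra hne
      have hzd := mem_unitDisk.mp hz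
      have hζd := mem_unitDisk.mp hζ
      have h1 : z - ζ = (∑' n : ℕ, (a (n + 2) : ℂ) * z ^ (n + 2))
          - ∑' n : ℕ, (a (n + 2) : ℂ) * ζ ^ (n + 2) := by
        have e1 := hf z hz
        have e2 := hf ζ hζ
        rw [e1, e2] at hfeq
        linear_combination hfeq
      have hSz := hconv z hz
      have hSζ := hconv ζ hζ
      have h2 : (∑' n : ℕ, (a (n + 2) : ℂ) * z ^ (n + 2))
            - ∑' n : ℕ, (a (n + 2) : ℂ) * ζ ^ (n + 2)
          = ∑' n : ℕ, ((a (n + 2) : ℂ) * z ^ (n + 2) - (a (n + 2) : ℂ) * ζ ^ (n + 2)) :=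
        (Summable.tsum_sub hSz hSζ).symm
      have hnormle : ∀ n : ℕ, ‖(a (n + 2) : ℂ) * z ^ (n + 2) - (a (n + 2) : ℂ) * ζ ^ (n + 2)‖
          ≤ ((n : ℝ) + 2) * a (n + 2) * ‖z - ζ‖ := by
        intro n
        rw [← mul_sub, norm_mul, Complex.norm_real, Real.norm_eq_abs, habs_eq]
        have hpow : ‖z ^ (n + 2) - ζ ^ (n + 2)‖ ≤ ((n : ℝ) + 2) * ‖z - ζ‖ := by
          have h := UCVaux.norm_pow_sub_pow
            (le_of_lt (show ‖z‖ < 1 by exact hzd))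
            (le_of_lt (show ‖ζ‖ < 1 by exact hζd)) (n + 2)
          have hc : ((n + 2 : ℕ) : ℝ) = (n : ℝ) + 2 := by push_cast; ring
          rwa [hc] at h
        calc a (n + 2) * ‖z ^ (n + 2) - ζ ^ (n + 2)‖
            ≤ a (n + 2) * (((n : ℝ) + 2) * ‖z - ζ‖) :=
              mul_le_mul_of_nonneg_left hpow (ha' n)
          _ = ((n : ℝ) + 2) * a (n + 2) * ‖z - ζ‖ := by ring
      have hsn : Summable (fun n : ℕ =>
          ‖(a (n + 2) : ℂ) * z ^ (n + 2) - (a (n + 2) : ℂ) * ζ ^ (n + 2)‖) :=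
        Summable.of_nonneg_of_le (fun n => norm_nonneg _) hnormle (hsum_u1.mul_right _)
      have h3 : ‖z - ζ‖ ≤ ∑' n : ℕ, ((n : ℝ) + 2) * a (n + 2) * ‖z - ζ‖ := by
        calc ‖z - ζ‖
            = ‖∑' n : ℕ, ((a (n + 2) : ℂ) * z ^ (n + 2) - (a (n + 2) : ℂ) * ζ ^ (n + 2))‖ := by
              rw [← h2, ← h1]
          _ ≤ ∑' n : ℕ, ‖(a (n + 2) : ℂ) * z ^ (n + 2) - (a (n + 2) : ℂ) * ζ ^ (n + 2)‖ :=
              norm_tsum_le_tsum_norm hsn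
          _ ≤ ∑' n : ℕ, ((n : ℝ) + 2) * a (n + 2) * ‖z - ζ‖ :=
              Summable.tsum_le_tsum hnormle hsn (hsum_u1.mul_right _)
      rw [tsum_mul_right] at h3
      have h5 : (∑' n : ℕ, ((n : ℝ) + 2) * a (n + 2)) * ‖z - ζ‖ ≤ (1 / 3) * ‖z - ζ‖ :=
        mul_le_mul_of_nonneg_right hu1_le (norm_nonneg _)
      have h6 : 0 < ‖z - ζ‖ := by
        rw [norm_pos_iff]
        exact sub_ne_zero_of_ne hne
      linarith
    refine ⟨⟨hfd, hf0, hd0⟩, hinj, ?_⟩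
    intro z hz
    have hr : ‖z‖ < 1 := mem_unitDisk.mp hz
    have hr0 : 0 ≤ ‖z‖ := norm_nonneg z
    set r := ‖z‖ with hrdef
    have hT_le : ‖T z‖ ≤ u r := by
      simp only [hTdef, hudef]
      have hnorms : ∀ n : ℕ, ‖((((n : ℝ) + 2) * a (n + 2) : ℝ) : ℂ) * z ^ (n + 1)‖
          = ((n : ℝ) + 2) * a (n + 2) * r ^ (n + 1) := by
        intro n
        rw [norm_mul, norm_pow, Complex.norm_real, Real.norm_eq_abs, abs_mul,
          _root_.abs_of_nonneg (hn2 n), habs_eq, ← hrdef]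
      have hsn : Summable (fun n : ℕ =>
          ‖((((n : ℝ) + 2) * a (n + 2) : ℝ) : ℂ) * z ^ (n + 1)‖) :=
        (hu_sum r hr0 hr).congr fun n => (hnorms n).symm
      calc ‖∑' n : ℕ, ((((n : ℝ) + 2) * a (n + 2) : ℝ) : ℂ) * z ^ (n + 1)‖
          ≤ ∑' n : ℕ, ‖((((n : ℝ) + 2) * a (n + 2) : ℝ) : ℂ) * z ^ (n + 1)‖ :=
            norm_tsum_le_tsum_norm hsn
        _ = ∑' n : ℕ, ((n : ℝ) + 2) * a (n + 2) * r ^ (n + 1) := tsum_congr hnorms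
    have hV_le : ‖V z‖ ≤ v r := by
      simp only [hVdef, hvdef]
      have hnorms : ∀ n : ℕ, ‖((((n : ℝ) + 2) * (((n : ℝ) + 1) * a (n + 2)) : ℝ) : ℂ) * z ^ n‖
          = ((n : ℝ) + 2) * (((n : ℝ) + 1) * a (n + 2)) * r ^ n := by
        intro n
        rw [norm_mul, norm_pow, Complex.norm_real, Real.norm_eq_abs,
          ← hrdef, abs_mul, abs_mul, _root_.abs_of_nonneg (hn2 n),
          _root_.abs_of_nonneg (by positivity : (0:ℝ) ≤ (n : ℝ) + 1), habs_eq]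
      have hsn : Summable (fun n : ℕ =>
          ‖((((n : ℝ) + 2) * (((n : ℝ) + 1) * a (n + 2)) : ℝ) : ℂ) * z ^ n‖) :=
        (hv_sum r hr0 hr).congr fun n => (hnorms n).symm
      calc ‖∑' n : ℕ, ((((n : ℝ) + 2) * (((n : ℝ) + 1) * a (n + 2)) : ℝ) : ℂ) * z ^ n‖
          ≤ ∑' n : ℕ, ‖((((n : ℝ) + 2) * (((n : ℝ) + 1) * a (n + 2)) : ℝ) : ℂ) * z ^ n‖ :=
            norm_tsum_le_tsum_norm hsn
        _ = ∑' n : ℕ, ((n : ℝ) + 2) * (((n : ℝ) + 1) * a (n + 2)) * r ^ n := tsum_congr hnorms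
    have hykey : 2 * (r * v r) + u r ≤ r := by
      rw [hsum_id r hr0 hr]
      have step1 : (∑' n : ℕ, ((n : ℝ) + 2) * (2 * ((n : ℝ) + 2) - 1) * a (n + 2) * r ^ (n + 1))
          ≤ ∑' n : ℕ, ((n : ℝ) + 2) * (2 * ((n : ℝ) + 2) - 1) * a (n + 2) * r := by
        refine Summable.tsum_le_tsum (fun n => ?_) (hw_sum r hr0 hr) (hsumW.mul_right r)
        refine mul_le_mul_of_nonneg_left ?_ (hWnn n)
        calc r ^ (n + 1) ≤ r ^ 1 := pow_le_pow_of_le_one hr0 hr.le (by omega)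
          _ = r := pow_one r
      rw [tsum_mul_right] at step1
      have step3 : (∑' n : ℕ, ((n : ℝ) + 2) * (2 * ((n : ℝ) + 2) - 1) * a (n + 2)) * r
          ≤ 1 * r := mul_le_mul_of_nonneg_right htsumW hr0
      linarith
    have hzV : ‖z * V z‖ ≤ r * v r := by
      rw [norm_mul, ← hrdef]
      exact mul_le_mul_of_nonneg_left hV_le hr0
    have hDnorm : 1 - ‖T z‖ ≤ ‖deriv f z‖ := by
      rw [hderiv_f z hr]
      calc 1 - ‖T z‖ = ‖(1:ℂ)‖ - ‖T z‖ := by simp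
        _ ≤ ‖1 - T z‖ := norm_sub_norm_le _ _
    have hTz1 : ‖T z‖ < 1 := by
      have h0v : 0 ≤ r * v r := mul_nonneg hr0 (hv_nonneg r hr0)
      linarith [hT_le, hykey, hr]
    have hDpos : 0 < ‖deriv f z‖ := by linarith
    have h2ω : 2 * ‖z * V z‖ < ‖deriv f z‖ := by linarith
    rw [hf2 z hr]
    set ω : ℂ := z * -V z / deriv f z with hωdef
    have hωabs : ‖ω‖ = ‖z * V z‖ / ‖deriv f z‖ := by
      rw [hωdef, norm_div, mul_neg, norm_neg]
    have habslt : 2 * ‖ω‖ < 1 := by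
      rw [hωabs, ← mul_div_assoc, div_lt_one hDpos]
      linarith
    have hre : -‖ω‖ ≤ ω.re := by
      have h := Complex.re_le_norm (-ω)
      rw [Complex.neg_re, norm_neg] at h
      linarith
    calc ‖ω‖ < 1 - ‖ω‖ := by linarith
      _ ≤ 1 + ω.re := by linarith
      _ = (1 + ω).re := by simp
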